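/- Coxeter's dilogarithm ladder: Li₂(ρ⁶) = 4·Li₂(ρ³) + 3·Li₂(ρ²) − 6·Li₂(ρ) + 7π²/30, where ρ = (√5−1)/2. -/

import Mathlib

set_option maxHeartbeats 1000000

open Real Filter Set Topology

/-- The polylogarithm `Li_s(x) = ∑_{n ≥ 1} x^n / n^s` as a real series. -/
noncomputable def Li (s : ℕ) (x : ℝ) : ℝ := ∑' n : ℕ, x ^ (n + 1) / (n + 1 : ℝ) ^ s

noncomputable def Li2' (x : ℝ) : ℝ := ∑' n : ℕ, x ^ n / ((n : ℝ) + 1)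

noncomputable def chi2 (x : ℝ) : ℝ := (Li 2 x - Li 2 (-x)) / 2



lemma summable_inv_sq : Summable (fun n : ℕ => 1 / ((n : ℝ) + 1) ^ 2) := by
  have h := (summable_nat_add_iff 1).2 (Real.summable_one_div_nat_pow.mpr one_lt_two)
  exact h.congr fun n => by push_cast; ring

lemma summable_Li2 {x : ℝ} (hx : |x| ≤ 1) :
    Summable (fun n : ℕ => x ^ (n + 1) / ((n : ℝ) + 1) ^ 2) := by
  refine Summable.of_norm_bounded summable_inv_sq fun n => ?_
  have h1 : (0:ℝ) < ((n:ℝ)+1)^2 := by positivity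
  rw [norm_div, Real.norm_eq_abs, Real.norm_eq_abs, abs_pow, abs_of_pos h1]
  gcongr
  exact pow_le_one₀ (abs_nonneg x) hx

lemma hasSum_Li2 {x : ℝ} (hx : |x| ≤ 1) :
    HasSum (fun n : ℕ => x ^ (n + 1) / ((n : ℝ) + 1) ^ 2) (Li 2 x) :=
  (summable_Li2 hx).hasSum




lemma hasDerivAt_Li2 {x : ℝ} (hx : |x| < 1) : HasDerivAt (Li 2) (Li2' x) x := by
  set r : ℝ := (|x| + 1) / 2 with hr
  have hr0 : 0 ≤ r := by positivity
  have hr1 : r < 1 := by simp only [hr]; linarith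
  have hxr : x ∈ Metric.ball (0:ℝ) r := by
    simp only [Metric.mem_ball, Real.dist_eq, sub_zero]; simp only [hr]; linarith
  have h0 : (0:ℝ) ∈ Metric.ball (0:ℝ) r := by
    simp only [Metric.mem_ball, dist_self]; linarith [abs_nonneg x]
  have hg : ∀ (n : ℕ) (y : ℝ), y ∈ Metric.ball (0:ℝ) r →
      HasDerivAt (fun z : ℝ => z ^ (n+1) / ((n:ℝ)+1) ^ 2) (y ^ n / ((n:ℝ)+1)) y := by
    intro n y _
    have := (hasDerivAt_pow (n+1) y).div_const (((n:ℝ)+1) ^ 2)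
    refine this.congr_deriv ?_
    have hn : ((n:ℝ)+1) ≠ 0 := by positivity
    push_cast
    field_simp
  have hg' : ∀ (n : ℕ) (y : ℝ), y ∈ Metric.ball (0:ℝ) r →
      ‖y ^ n / ((n:ℝ)+1)‖ ≤ r ^ n := by
    intro n y hy
    rw [Metric.mem_ball, Real.dist_eq, sub_zero] at hy
    rw [norm_div, Real.norm_eq_abs, Real.norm_eq_abs, abs_pow]
    have h1 : (1:ℝ) ≤ |(n:ℝ)+1| := by
      rw [abs_of_pos (by positivity)]; simp
    calc |y| ^ n / |(n:ℝ)+1| ≤ |y| ^ n / 1 := by gcongr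
    _ = |y| ^ n := by ring
    _ ≤ r ^ n := by gcongr
  have hg0 : Summable (fun n : ℕ => (0:ℝ) ^ (n+1) / ((n:ℝ)+1) ^ 2) := by
    refine summable_of_ne_finset_zero (s := ∅) fun n _ => ?_
    simp
  exact hasDerivAt_tsum_of_isPreconnected (summable_geometric_of_lt_one hr0 hr1)
    Metric.isOpen_ball (convex_ball (0:ℝ) r).isPreconnected hg hg' h0 hg0 hxr

lemma Li2'_eq {x : ℝ} (hx : |x| < 1) (hx0 : x ≠ 0) : Li2' x = -Real.log (1 - x) / x := by
  have h := (Real.hasSum_pow_div_log_of_abs_lt_one hx).mul_left x⁻¹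
  have h2 : HasSum (fun n : ℕ => x ^ n / ((n:ℝ)+1)) (x⁻¹ * -Real.log (1-x)) := by
    refine h.congr_fun fun n => ?_
    rw [pow_succ']
    field_simp
  rw [Li2', h2.tsum_eq]
  field_simp




lemma hasSum_Li2_one : HasSum (fun n : ℕ => 1 / ((n:ℝ)+1) ^ 2) (π ^ 2 / 6) := by
  have h : HasSum (fun n : ℕ => (1:ℝ) / (n:ℝ) ^ 2) (π ^ 2 / 6) := hasSum_zeta_two
  have h2 := (hasSum_nat_add_iff' (f := fun n : ℕ => (1:ℝ) / (n:ℝ) ^ 2) 1).2 h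
  simp only [Finset.range_one, Finset.sum_singleton, Nat.cast_zero] at h2
  norm_num at h2
  exact h2.congr_fun fun n => by push_cast; ring

lemma hasSum_odd_part : HasSum (fun k : ℕ => 1 / (2*(k:ℝ)+2) ^ 2) (π ^ 2 / 24) := by
  have h := hasSum_Li2_one.mul_left (1/4 : ℝ)
  have e : (π:ℝ)^2/24 = 1/4 * (π^2/6) := by ring
  rw [e]
  exact h.congr_fun fun k => by field_simp; ring

lemma hasSum_even_part : HasSum (fun k : ℕ => 1 / (2*(k:ℝ)+1) ^ 2) (π ^ 2 / 8) := by
  have hodd : HasSum (fun k : ℕ => 1 / (((2*k+1:ℕ):ℝ)+1)^2) (π^2/24) :=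
    hasSum_odd_part.congr_fun fun k => by push_cast; ring_nf
  have heS : Summable (fun k : ℕ => 1 / (2*(k:ℝ)+1) ^ 2) := by
    refine Summable.of_nonneg_of_le (fun k => by positivity) (fun k => ?_) summable_inv_sq
    gcongr
    linarith [Nat.cast_nonneg (α := ℝ) k]
  obtain ⟨S, hS⟩ := heS
  have heven : HasSum (fun k : ℕ => 1 / (((2*k:ℕ):ℝ)+1)^2) S :=
    hS.congr_fun fun k => by push_cast; ring_nf
  have htot : HasSum (fun n : ℕ => 1 / ((n:ℝ)+1)^2) (S + π^2/24) :=
    heven.even_add_odd hodd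
  have : S + π^2/24 = π^2/6 := htot.unique hasSum_Li2_one
  have hSv : S = π^2/8 := by linarith
  rwa [hSv] at hS

-- alternating: ∑ (-1)^(n+1)/(n+1)^2 = -π²/12, i.e. Li 2 (-1) value
lemma hasSum_Li2_neg_one : HasSum (fun n : ℕ => (-1:ℝ) ^ (n+1) / ((n:ℝ)+1) ^ 2) (-(π ^ 2 / 12)) := by
  have he : HasSum (fun k : ℕ => (-1:ℝ) ^ ((2*k:ℕ)+1) / (((2*k:ℕ):ℝ)+1)^2) (-(π^2/8)) := by
    refine hasSum_even_part.neg.congr_fun fun k => ?_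
    have hs : (-1:ℝ) ^ (2*k+1) = -1 := Odd.neg_one_pow ⟨k, by ring⟩
    rw [hs]; push_cast; ring
  have ho : HasSum (fun k : ℕ => (-1:ℝ) ^ ((2*k+1:ℕ)+1) / (((2*k+1:ℕ):ℝ)+1)^2) (π^2/24) := by
    refine hasSum_odd_part.congr_fun fun k => ?_
    have hs : (-1:ℝ) ^ (2*k+1+1) = 1 := Even.neg_one_pow ⟨k+1, by ring⟩
    rw [hs]; push_cast; ring
  have h := HasSum.even_add_odd (f := fun n : ℕ => (-1:ℝ) ^ (n+1) / ((n:ℝ)+1) ^ 2) he ho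
  have e : -(π^2/8:ℝ) + π^2/24 = -(π^2/12) := by ring
  rwa [e] at h





lemma continuousOn_Li2 : ContinuousOn (Li 2) (Icc (-1 : ℝ) 1) := by
  have h : ContinuousOn (fun x : ℝ => ∑' n : ℕ, x ^ (n+1) / ((n:ℝ)+1) ^ 2) (Icc (-1:ℝ) 1) := by
    refine continuousOn_tsum
      (fun n => (by fun_prop : Continuous fun x : ℝ => x ^ (n+1) / ((n:ℝ)+1)^2).continuousOn)
      summable_inv_sq fun n x hx => ?_
    have hx1 : |x| ≤ 1 := abs_le.2 ⟨hx.1, hx.2⟩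
    have h1 : (0:ℝ) < ((n:ℝ)+1)^2 := by positivity
    rw [norm_div, Real.norm_eq_abs, Real.norm_eq_abs, abs_pow, abs_of_pos h1]
    gcongr
    exact pow_le_one₀ (abs_nonneg x) hx1
  exact h

lemma Li2_one : Li 2 1 = π ^ 2 / 6 := by
  refine (hasSum_Li2 (by norm_num)).unique ?_
  exact hasSum_Li2_one.congr_fun fun n => by norm_num

lemma Li2_neg_one : Li 2 (-1) = -(π ^ 2 / 12) :=
  (hasSum_Li2 (by norm_num)).unique hasSum_Li2_neg_one


lemma hasDerivAt_Li2' {x : ℝ} (hx : |x| < 1) (hx0 : x ≠ 0) :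
    HasDerivAt (Li 2) (-Real.log (1 - x) / x) x := by
  rw [← Li2'_eq hx hx0]; exact hasDerivAt_Li2 hx

lemma Li2_zero : Li 2 0 = 0 := by
  simp [Li]

-- generic constancy helper
lemma eq_of_deriv0 {F : ℝ → ℝ} {a b : ℝ} (h : ∀ x ∈ Ioo a b, HasDerivAt F 0 x)
    {x y : ℝ} (hx : x ∈ Ioo a b) (hy : y ∈ Ioo a b) : F x = F y := by
  have key : ∀ u v : ℝ, u ∈ Ioo a b → v ∈ Ioo a b → u < v → F u = F v := by
    intro u v hu hv huv
    have hsub : Icc u v ⊆ Ioo a b := Icc_subset_Ioo hu.1 hv.2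
    have hcont : ContinuousOn F (Icc u v) := fun z hz =>
      ((h z (hsub hz)).continuousAt).continuousWithinAt
    have hder : ∀ z ∈ Ioo u v, HasDerivAt F ((fun _ => (0:ℝ)) z) z := fun z hz =>
      h z (hsub (Ioo_subset_Icc_self hz))
    obtain ⟨c, _, hc⟩ := exists_hasDerivAt_eq_slope F (fun _ => (0:ℝ)) huv hcont hder
    have h' := div_eq_zero_iff.mp hc.symm
    rcases h' with h' | h'
    · linarith
    · exfalso; linarith
  rcases lt_trichotomy x y with hlt | heq | hgt
  · exact key x y hx hy hlt
  · rw [heq]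
  · exact (key y x hy hx hgt).symm

-- x * log x style limit helper
lemma log_mul_small {F : ℝ → ℝ} (hF : ∀ᶠ x in 𝓝[>] (0:ℝ), |F x| ≤ 4 * x) :
    Tendsto (fun x => Real.log x * F x) (𝓝[>] (0:ℝ)) (𝓝 0) := by
  have h0 : Tendsto (fun x : ℝ => Real.log x * x) (𝓝[>] (0:ℝ)) (𝓝 0) := by
    have := tendsto_log_mul_rpow_nhdsGT_zero (one_pos)
    simpa [Real.rpow_one] using this
  have h1 : Tendsto (fun x : ℝ => 4 * |Real.log x * x|) (𝓝[>] (0:ℝ)) (𝓝 0) := by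
    have := (h0.abs).const_mul (4:ℝ)
    simpa using this
  apply squeeze_zero_norm' ?_ h1
  filter_upwards [hF, self_mem_nhdsWithin] with x hx hx0
  rw [Real.norm_eq_abs, abs_mul]
  calc |Real.log x| * |F x| ≤ |Real.log x| * (4 * x) :=
        mul_le_mul_of_nonneg_left hx (abs_nonneg _)
  _ = 4 * (|Real.log x| * x) := by ring
  _ = 4 * |Real.log x * x| := by rw [abs_mul, abs_of_pos (show (0:ℝ) < x from hx0)]

lemma abs_log_one_sub_le {x : ℝ} (hx : x ∈ Ioo (0:ℝ) (1/2)) : |Real.log (1 - x)| ≤ 2 * x := by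
  obtain ⟨hx0, hx2⟩ := hx
  have h1 : (0:ℝ) < 1 - x := by linarith
  have hub : Real.log (1 - x) ≤ 0 := Real.log_nonpos (by linarith) (by linarith)
  have hlb : -(2*x) ≤ Real.log (1 - x) := by
    have he : Real.exp (-(2*x)) ≤ 1 - x := by
      have h2 : 2*x + 1 ≤ Real.exp (2*x) := Real.add_one_le_exp (2*x)
      have h3 : Real.exp (-(2*x)) = 1 / Real.exp (2*x) := by
        rw [Real.exp_neg]; ring
      rw [h3]
      rw [div_le_iff₀ (Real.exp_pos _)]
      nlinarith [Real.exp_pos (2*x)]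
    calc -(2*x) = Real.log (Real.exp (-(2*x))) := (Real.log_exp _).symm
    _ ≤ Real.log (1 - x) := Real.log_le_log (Real.exp_pos _) he
  rw [abs_le]; constructor <;> linarith

lemma abs_log_one_add_le {x : ℝ} (hx : x ∈ Ioo (0:ℝ) (1/2)) : |Real.log (1 + x)| ≤ 2 * x := by
  obtain ⟨hx0, _⟩ := hx
  have h1 : (0:ℝ) ≤ Real.log (1 + x) := Real.log_nonneg (by linarith)
  have h2 : Real.log (1 + x) ≤ x := by
    have := Real.log_le_sub_one_of_pos (show (0:ℝ) < 1 + x by linarith)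
    linarith
  rw [abs_of_nonneg h1]; linarith



lemma Li2_duplication {x : ℝ} (hx : |x| ≤ 1) :
    Li 2 x + Li 2 (-x) = (1/2) * Li 2 (x^2) := by
  have hx2 : |x^2| ≤ 1 := by
    rw [abs_pow]
    exact pow_le_one₀ (abs_nonneg x) hx
  have hxn : |(-x)| ≤ 1 := by rwa [abs_neg]
  have hsum : HasSum (fun n : ℕ => x ^ (n+1) / ((n:ℝ)+1)^2 + (-x) ^ (n+1) / ((n:ℝ)+1)^2)
      (Li 2 x + Li 2 (-x)) := (hasSum_Li2 hx).add (hasSum_Li2 hxn)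
  have he : HasSum (fun k : ℕ => x ^ ((2*k:ℕ)+1) / (((2*k:ℕ):ℝ)+1)^2
      + (-x) ^ ((2*k:ℕ)+1) / (((2*k:ℕ):ℝ)+1)^2) 0 := by
    refine hasSum_zero.congr_fun fun k => ?_
    have hodd : (-x) ^ (2*k+1) = -(x ^ (2*k+1)) := Odd.neg_pow ⟨k, by ring⟩ x
    rw [hodd]
    ring
  have ho : HasSum (fun k : ℕ => x ^ ((2*k+1:ℕ)+1) / (((2*k+1:ℕ):ℝ)+1)^2
      + (-x) ^ ((2*k+1:ℕ)+1) / (((2*k+1:ℕ):ℝ)+1)^2) ((1/2) * Li 2 (x^2)) := by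
    refine ((hasSum_Li2 hx2).mul_left (1/2)).congr_fun fun k => ?_
    have heven : (-x) ^ (2*k+1+1) = x ^ (2*k+1+1) := Even.neg_pow ⟨k+1, by ring⟩ x
    have hp : (x^2) ^ (k+1) = x ^ (2*k+1+1) := by
      rw [← pow_mul, show 2*(k+1) = 2*k+1+1 from by ring]
    rw [heven, hp]
    push_cast
    field_simp
    ring
  have htot := HasSum.even_add_odd
    (f := fun n : ℕ => x ^ (n+1) / ((n:ℝ)+1)^2 + (-x) ^ (n+1) / ((n:ℝ)+1)^2) he ho
  rw [zero_add] at htot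
  exact hsum.unique htot



lemma euler_deriv {x : ℝ} (hx : x ∈ Ioo (0:ℝ) 1) :
    HasDerivAt (fun y => Li 2 y + Li 2 (1 - y) + Real.log y * Real.log (1 - y)) 0 x := by
  obtain ⟨hx0, hx1⟩ := hx
  have h1x : (0:ℝ) < 1 - x := by linarith
  have h1 : HasDerivAt (Li 2) (-Real.log (1 - x) / x) x :=
    hasDerivAt_Li2' (by rw [abs_of_pos hx0]; linarith) hx0.ne'
  have hinner : HasDerivAt (fun y : ℝ => 1 - y) (-1) x := by
    simpa using (hasDerivAt_id x).const_sub 1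
  have h2outer : HasDerivAt (Li 2) (-Real.log (1 - (1 - x)) / (1 - x)) (1 - x) :=
    hasDerivAt_Li2' (by rw [abs_of_pos h1x]; linarith) h1x.ne'
  have h2 : HasDerivAt (fun y => Li 2 (1 - y)) (-Real.log (1 - (1 - x)) / (1 - x) * (-1)) x :=
    h2outer.comp x hinner
  have hlog1 : HasDerivAt Real.log (1/x) x := by
    simpa using Real.hasDerivAt_log hx0.ne'
  have hlog2 : HasDerivAt (fun y => Real.log (1 - y)) (1/(1-x) * (-1)) x := by
    have := (Real.hasDerivAt_log h1x.ne').comp x hinner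
    exact this.congr_deriv (by rw [one_div])
  have h3 : HasDerivAt (fun y => Real.log y * Real.log (1 - y))
      (1/x * Real.log (1 - x) + Real.log x * (1/(1-x) * (-1))) x := hlog1.mul hlog2
  have := (h1.add h2).add h3
  refine this.congr_deriv ?_
  have h0 : 1 - (1 - x) = x := by ring
  rw [h0]
  field_simp
  ring

lemma euler_identity {x : ℝ} (hx : x ∈ Ioo (0:ℝ) 1) :
    Li 2 x + Li 2 (1 - x) + Real.log x * Real.log (1 - x) = π ^ 2 / 6 := by
  set F := fun y => Li 2 y + Li 2 (1 - y) + Real.log y * Real.log (1 - y) with hF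
  have hconst : ∀ y ∈ Ioo (0:ℝ) 1, F y = F x := fun y hy =>
    eq_of_deriv0 (fun z hz => euler_deriv hz) hy hx
  have hIoo : Ioo (0:ℝ) 1 ∈ 𝓝[>] (0:ℝ) := Ioo_mem_nhdsGT_of_mem ⟨le_refl 0, one_pos⟩
  have hT1 : Tendsto F (𝓝[>] (0:ℝ)) (𝓝 (F x)) := by
    refine tendsto_const_nhds.congr' ?_
    filter_upwards [hIoo] with y hy
    exact (hconst y hy).symm
  have hT2 : Tendsto F (𝓝[>] (0:ℝ)) (𝓝 (π ^ 2 / 6)) := by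
    have t1 : Tendsto (Li 2) (𝓝[>] (0:ℝ)) (𝓝 0) := by
      have := (hasDerivAt_Li2 (x := 0) (by norm_num)).continuousAt.tendsto
      rw [Li2_zero] at this
      exact this.mono_left nhdsWithin_le_nhds
    have t2 : Tendsto (fun y : ℝ => Li 2 (1 - y)) (𝓝[>] (0:ℝ)) (𝓝 (π ^ 2 / 6)) := by
      have hc : Tendsto (Li 2) (𝓝[Icc (-1:ℝ) 1] 1) (𝓝 (Li 2 1)) :=
        (continuousOn_Li2 1 (by norm_num)).tendsto
      have hmap : Tendsto (fun y : ℝ => 1 - y) (𝓝[>] (0:ℝ)) (𝓝[Icc (-1:ℝ) 1] 1) := by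
        rw [tendsto_nhdsWithin_iff]
        constructor
        · have hcont : Continuous (fun y : ℝ => 1 - y) := continuous_const.sub continuous_id
          have h1 : Tendsto (fun y : ℝ => 1 - y) (𝓝 (0:ℝ)) (𝓝 1) := by
            simpa using hcont.tendsto (0:ℝ)
          exact h1.mono_left nhdsWithin_le_nhds
        · filter_upwards [hIoo] with y hy
          exact ⟨by linarith [hy.1, hy.2], by linarith [hy.1]⟩
      have := hc.comp hmap
      rwa [Li2_one] at this
    have t3 : Tendsto (fun y : ℝ => Real.log y * Real.log (1 - y)) (𝓝[>] (0:ℝ)) (𝓝 0) := by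
      apply log_mul_small
      filter_upwards [Ioo_mem_nhdsGT_of_mem (show (0:ℝ) ∈ Ico (0:ℝ) (1/2) from ⟨le_refl 0, by norm_num⟩)] with y hy
      calc |Real.log (1 - y)| ≤ 2 * y := abs_log_one_sub_le hy
      _ ≤ 4 * y := by linarith [hy.1.le]
    have := (t1.add t2).add t3
    simpa using this
  exact tendsto_nhds_unique hT1 hT2



lemma landen_deriv {x : ℝ} (hx : x ∈ Ioo (0:ℝ) (9/20)) :
    HasDerivAt (fun y => Li 2 y + Li 2 (-y/(1-y)) + (1/2) * (Real.log (1-y))^2) 0 x := by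
  obtain ⟨hx0, hx1⟩ := hx
  have h1x : (0:ℝ) < 1 - x := by linarith
  set w : ℝ := -x/(1-x) with hw
  have hwneg : w < 0 := by
    rw [hw]; apply div_neg_of_neg_of_pos (by linarith) h1x
  have hwgt : -1 < w := by
    rw [hw, neg_div, neg_lt, neg_neg, div_lt_one h1x]; linarith
  have hw1 : (1:ℝ) - w = (1-x)⁻¹ := by
    rw [hw]; field_simp; ring
  have h1 : HasDerivAt (Li 2) (-Real.log (1 - x) / x) x :=
    hasDerivAt_Li2' (by rw [abs_of_pos hx0]; linarith) hx0.ne'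
  have hinner : HasDerivAt (fun y : ℝ => -y/(1-y))
      ((-1 * (1-x) - (-x) * (-1)) / (1-x)^2) x := by
    exact ((hasDerivAt_id x).neg).div ((hasDerivAt_id x).const_sub 1) h1x.ne'
  have houter : HasDerivAt (Li 2) (-Real.log (1 - w) / w) w :=
    hasDerivAt_Li2' (abs_lt.2 ⟨hwgt, by linarith⟩) hwneg.ne
  have h2 : HasDerivAt (fun y => Li 2 (-y/(1-y)))
      (-Real.log (1 - w) / w * ((-1 * (1-x) - (-x) * (-1)) / (1-x)^2)) x :=
    by have := houter.comp x hinner; exact this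
  have hlog2 : HasDerivAt (fun y => Real.log (1 - y)) (1/(1-x) * (-1)) x := by
    have hin : HasDerivAt (fun y : ℝ => 1 - y) (-1) x := by
      simpa using (hasDerivAt_id x).const_sub 1
    exact ((Real.hasDerivAt_log h1x.ne').comp x hin).congr_deriv (by rw [one_div])
  have h3 : HasDerivAt (fun y => (1/2) * (Real.log (1-y))^2)
      ((1/2) * ((2:ℕ) * (Real.log (1-x))^1 * (1/(1-x) * (-1)))) x :=
    (hlog2.pow 2).const_mul (1/2)
  have := (h1.add h2).add h3
  refine this.congr_deriv ?_
  rw [hw1, Real.log_inv, hw]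
  field_simp
  ring

lemma landen_identity {x : ℝ} (hx : x ∈ Ioo (0:ℝ) (9/20)) :
    Li 2 x + Li 2 (-x/(1-x)) + (1/2) * (Real.log (1-x))^2 = 0 := by
  set F := fun y => Li 2 y + Li 2 (-y/(1-y)) + (1/2) * (Real.log (1-y))^2 with hF
  have hconst : ∀ y ∈ Ioo (0:ℝ) (9/20), F y = F x := fun y hy =>
    eq_of_deriv0 (fun z hz => landen_deriv hz) hy hx
  have hIoo : Ioo (0:ℝ) (9/20) ∈ 𝓝[>] (0:ℝ) :=
    Ioo_mem_nhdsGT_of_mem ⟨le_refl 0, by norm_num⟩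
  have hT1 : Tendsto F (𝓝[>] (0:ℝ)) (𝓝 (F x)) := by
    refine tendsto_const_nhds.congr' ?_
    filter_upwards [hIoo] with y hy
    exact (hconst y hy).symm
  have hT2 : Tendsto F (𝓝[>] (0:ℝ)) (𝓝 0) := by
    have hLi0 : Tendsto (Li 2) (𝓝 (0:ℝ)) (𝓝 0) := by
      have := (hasDerivAt_Li2 (x := 0) (by norm_num)).continuousAt.tendsto
      rwa [Li2_zero] at this
    have t1 : Tendsto (Li 2) (𝓝[>] (0:ℝ)) (𝓝 0) := hLi0.mono_left nhdsWithin_le_nhds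
    have hwcont : Tendsto (fun y : ℝ => -y/(1-y)) (𝓝 (0:ℝ)) (𝓝 0) := by
      have : ContinuousAt (fun y : ℝ => -y/(1-y)) 0 :=
        (continuous_neg.continuousAt).div
          ((continuous_const.sub continuous_id).continuousAt) (by norm_num)
      simpa using this.tendsto
    have t2 : Tendsto (fun y : ℝ => Li 2 (-y/(1-y))) (𝓝[>] (0:ℝ)) (𝓝 0) :=
      (hLi0.comp hwcont).mono_left nhdsWithin_le_nhds
    have t3 : Tendsto (fun y : ℝ => (1/2) * (Real.log (1-y))^2) (𝓝[>] (0:ℝ)) (𝓝 0) := by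
      have hc : ContinuousAt (fun y : ℝ => (1/2) * (Real.log (1-y))^2) 0 := by
        apply ContinuousAt.mul continuousAt_const
        apply ContinuousAt.pow
        exact (Real.continuousAt_log (by norm_num)).comp
          ((continuous_const.sub continuous_id).continuousAt)
      have := hc.tendsto.mono_left (nhdsWithin_le_nhds (s := Ioi (0:ℝ)))
      simpa using this
    have htot := (t1.add t2).add t3
    have htot' : Tendsto (fun y => Li 2 y + Li 2 (-y/(1-y)) + (1/2) * (Real.log (1-y))^2)
        (𝓝[>] (0:ℝ)) (𝓝 0) := by simpa only [add_zero] using htot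
    exact htot'
  have h0 := tendsto_nhds_unique hT1 hT2
  rw [← h0]




lemma chi2_one : chi2 1 = π ^ 2 / 8 := by
  rw [chi2, Li2_one, Li2_neg_one]; ring

lemma hasDerivAt_chi2 {x : ℝ} (hx : |x| < 1) (hx0 : x ≠ 0) :
    HasDerivAt chi2 ((Real.log (1+x) - Real.log (1-x)) / (2*x)) x := by
  have h1 : HasDerivAt (Li 2) (-Real.log (1 - x) / x) x := hasDerivAt_Li2' hx hx0
  have houter : HasDerivAt (Li 2) (-Real.log (1 + x) / (-x)) (-x) := by
    have := hasDerivAt_Li2' (x := -x) (by rwa [abs_neg]) (neg_ne_zero.2 hx0)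
    simpa [sub_neg_eq_add] using this
  have h2 : HasDerivAt (fun y : ℝ => Li 2 (-y)) (-Real.log (1 + x) / (-x) * (-1)) x :=
    houter.comp x (hasDerivAt_neg x)
  have := (h1.sub h2).div_const 2
  refine this.congr_deriv ?_
  field_simp
  ring

lemma continuousAt_chi2_zero : ContinuousAt chi2 0 := by
  have h := (hasDerivAt_Li2 (x := 0) (by norm_num)).continuousAt
  have h2 : ContinuousAt (fun y : ℝ => Li 2 (-y)) 0 := by
    have hn : ContinuousAt (fun y : ℝ => -y) 0 := continuous_neg.continuousAt
    have hL : ContinuousAt (Li 2) (-(0:ℝ)) := by simpa using h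
    exact hL.comp hn
  exact ((h.sub h2).div_const 2)

lemma chi2_zero : chi2 0 = 0 := by
  simp [chi2, Li2_zero]

lemma continuousOn_chi2 : ContinuousOn chi2 (Icc (-1 : ℝ) 1) := by
  apply ContinuousOn.div_const
  apply ContinuousOn.sub continuousOn_Li2
  have hmaps : MapsTo (fun y : ℝ => -y) (Icc (-1:ℝ) 1) (Icc (-1:ℝ) 1) := by
    intro y hy; constructor <;> simp at hy ⊢ <;> linarith [hy.1, hy.2]
  exact continuousOn_Li2.comp (continuous_neg.continuousOn) hmaps

lemma chi2_deriv {x : ℝ} (hx : x ∈ Ioo (0:ℝ) 1) :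
    HasDerivAt (fun y => chi2 y + chi2 ((1-y)/(1+y))
      + (1/2) * (Real.log y * Real.log ((1-y)/(1+y)))) 0 x := by
  obtain ⟨hx0, hx1⟩ := hx
  have h1x : (0:ℝ) < 1 - x := by linarith
  have h2x : (0:ℝ) < 1 + x := by linarith
  set v : ℝ := (1-x)/(1+x) with hv
  have hv0 : 0 < v := div_pos h1x h2x
  have hv1 : v < 1 := by rw [hv, div_lt_one h2x]; linarith
  have hvsub : (1:ℝ) - v = 2*x/(1+x) := by rw [hv]; field_simp; ring
  have hvadd : (1:ℝ) + v = 2/(1+x) := by rw [hv]; field_simp; ring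
  have h1 : HasDerivAt chi2 ((Real.log (1+x) - Real.log (1-x)) / (2*x)) x :=
    hasDerivAt_chi2 (by rw [abs_of_pos hx0]; linarith) hx0.ne'
  have hinner : HasDerivAt (fun y : ℝ => (1-y)/(1+y))
      ((-1 * (1+x) - (1-x) * 1) / (1+x)^2) x :=
    ((hasDerivAt_id x).const_sub 1).div ((hasDerivAt_id x).const_add 1) h2x.ne'
  have houter : HasDerivAt chi2 ((Real.log (1+v) - Real.log (1-v)) / (2*v)) v :=
    hasDerivAt_chi2 (by rw [abs_of_pos hv0]; exact hv1) hv0.ne'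
  have h2 : HasDerivAt (fun y => chi2 ((1-y)/(1+y)))
      ((Real.log (1+v) - Real.log (1-v)) / (2*v) * ((-1 * (1+x) - (1-x) * 1) / (1+x)^2)) x :=
    by have := houter.comp x hinner; exact this
  have hlogx : HasDerivAt Real.log (1/x) x := by
    simpa using Real.hasDerivAt_log hx0.ne'
  have hlogv : HasDerivAt (fun y => Real.log ((1-y)/(1+y)))
      (1/v * ((-1 * (1+x) - (1-x) * 1) / (1+x)^2)) x := by
    have := (Real.hasDerivAt_log hv0.ne').comp x hinner
    exact this.congr_deriv (by rw [one_div])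
  have h3 : HasDerivAt (fun y => (1/2) * (Real.log y * Real.log ((1-y)/(1+y))))
      ((1/2) * (1/x * Real.log ((1-x)/(1+x)) + Real.log x
        * (1/v * ((-1 * (1+x) - (1-x) * 1) / (1+x)^2)))) x :=
    (hlogx.mul hlogv).const_mul (1/2)
  have htot := (h1.add h2).add h3
  refine htot.congr_deriv ?_
  have e1 : Real.log (1+v) = Real.log 2 - Real.log (1+x) := by
    rw [hvadd, Real.log_div (by norm_num) h2x.ne']
  have e2 : Real.log (1-v) = Real.log 2 + Real.log x - Real.log (1+x) := by
    rw [hvsub, Real.log_div (by positivity) h2x.ne', Real.log_mul (by norm_num) hx0.ne']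
  have e3 : Real.log ((1-x)/(1+x)) = Real.log (1-x) - Real.log (1+x) :=
    Real.log_div h1x.ne' h2x.ne'
  rw [e1, e2, e3, hv]
  field_simp
  ring

lemma chi2_identity {x : ℝ} (hx : x ∈ Ioo (0:ℝ) 1) :
    chi2 x + chi2 ((1-x)/(1+x)) + (1/2) * (Real.log x * Real.log ((1-x)/(1+x)))
      = π ^ 2 / 8 := by
  set F := fun y => chi2 y + chi2 ((1-y)/(1+y))
      + (1/2) * (Real.log y * Real.log ((1-y)/(1+y))) with hF
  have hconst : ∀ y ∈ Ioo (0:ℝ) 1, F y = F x := fun y hy =>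
    eq_of_deriv0 (fun z hz => chi2_deriv hz) hy hx
  have hIoo : Ioo (0:ℝ) 1 ∈ 𝓝[>] (0:ℝ) := Ioo_mem_nhdsGT_of_mem ⟨le_refl 0, one_pos⟩
  have hT1 : Tendsto F (𝓝[>] (0:ℝ)) (𝓝 (F x)) := by
    refine tendsto_const_nhds.congr' ?_
    filter_upwards [hIoo] with y hy
    exact (hconst y hy).symm
  have hT2 : Tendsto F (𝓝[>] (0:ℝ)) (𝓝 (π ^ 2 / 8)) := by
    have t1 : Tendsto chi2 (𝓝[>] (0:ℝ)) (𝓝 0) := by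
      have := continuousAt_chi2_zero.tendsto
      rw [chi2_zero] at this
      exact this.mono_left nhdsWithin_le_nhds
    have t2 : Tendsto (fun y : ℝ => chi2 ((1-y)/(1+y))) (𝓝[>] (0:ℝ)) (𝓝 (π ^ 2 / 8)) := by
      have hc : Tendsto chi2 (𝓝[Icc (-1:ℝ) 1] 1) (𝓝 (chi2 1)) :=
        (continuousOn_chi2 1 (by norm_num)).tendsto
      have hmap : Tendsto (fun y : ℝ => (1-y)/(1+y)) (𝓝[>] (0:ℝ)) (𝓝[Icc (-1:ℝ) 1] 1) := by
        rw [tendsto_nhdsWithin_iff]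
        constructor
        · have hca : ContinuousAt (fun y : ℝ => (1-y)/(1+y)) 0 :=
            ((continuous_const.sub continuous_id).continuousAt).div
              ((continuous_const.add continuous_id).continuousAt) (by norm_num)
          have := hca.tendsto
          norm_num at this
          exact this.mono_left nhdsWithin_le_nhds
        · filter_upwards [hIoo] with y hy
          have h1y : (0:ℝ) < 1 - y := by linarith [hy.2]
          have h2y : (0:ℝ) < 1 + y := by linarith [hy.1]
          constructor
          · have : (0:ℝ) < (1-y)/(1+y) := div_pos h1y h2y
            linarith
          · rw [div_le_one h2y]; linarith [hy.1]
      have := hc.comp hmap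
      rwa [chi2_one] at this
    have t3 : Tendsto (fun y : ℝ => (1/2) * (Real.log y * Real.log ((1-y)/(1+y))))
        (𝓝[>] (0:ℝ)) (𝓝 0) := by
      have hmain : Tendsto (fun y : ℝ => Real.log y * Real.log ((1-y)/(1+y)))
          (𝓝[>] (0:ℝ)) (𝓝 0) := by
        apply log_mul_small
        filter_upwards [Ioo_mem_nhdsGT_of_mem
          (show (0:ℝ) ∈ Ico (0:ℝ) (1/2) from ⟨le_refl 0, by norm_num⟩)] with y hy
        have h1y : (0:ℝ) < 1 - y := by linarith [hy.2]
        have h2y : (0:ℝ) < 1 + y := by linarith [hy.1]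
        rw [Real.log_div h1y.ne' h2y.ne']
        calc |Real.log (1-y) - Real.log (1+y)|
            ≤ |Real.log (1-y)| + |Real.log (1+y)| := abs_sub _ _
        _ ≤ 2*y + 2*y := add_le_add (abs_log_one_sub_le hy) (abs_log_one_add_le hy)
        _ = 4 * y := by ring
      have := hmain.const_mul (1/2:ℝ)
      simpa using this
    have htot := (t1.add t2).add t3
    have htot' : Tendsto F (𝓝[>] (0:ℝ)) (𝓝 (0 + π^2/8 + 0)) := htot
    simpa only [add_zero, zero_add] using htot'
  exact tendsto_nhds_unique hT1 hT2




theorem stmt_7 :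
    Li 2 (((Real.sqrt 5 - 1) / 2) ^ 6)
      = 4 * Li 2 (((Real.sqrt 5 - 1) / 2) ^ 3) + 3 * Li 2 (((Real.sqrt 5 - 1) / 2) ^ 2)
        - 6 * Li 2 ((Real.sqrt 5 - 1) / 2) + 7 * Real.pi ^ 2 / 30 := by
  set ρ : ℝ := (Real.sqrt 5 - 1) / 2 with hρdef
  have h5 : Real.sqrt 5 ^ 2 = 5 := Real.sq_sqrt (by norm_num)
  have h5lb : 2.1 < Real.sqrt 5 := by nlinarith [Real.sqrt_nonneg 5]
  have h5ub : Real.sqrt 5 < 2.3 := by nlinarith [Real.sqrt_nonneg 5]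
  have hρ0 : 0 < ρ := by rw [hρdef]; linarith
  have hρ1 : ρ < 1 := by rw [hρdef]; linarith
  have hq : ρ ^ 2 = 1 - ρ := by rw [hρdef]; nlinarith
  have hmem : ρ ∈ Ioo (0:ℝ) 1 := ⟨hρ0, hρ1⟩
  have hmem2 : ρ ^ 2 ∈ Ioo (0:ℝ) (9/20) := by
    constructor
    · positivity
    · rw [hq, hρdef]; linarith
  -- E1 : Euler at ρ
  have E1 : Li 2 ρ + Li 2 (ρ^2) + Real.log ρ * (2 * Real.log ρ) = π^2/6 := by
    have := euler_identity hmem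
    rw [show (1:ℝ) - ρ = ρ^2 from hq.symm] at this
    rw [show Real.log (ρ^2) = 2 * Real.log ρ by
      rw [Real.log_pow]; push_cast; ring] at this
    exact this
  -- E2 : Landen at ρ²
  have E2 : Li 2 (ρ^2) + Li 2 (-ρ) + (1/2) * (Real.log ρ * Real.log ρ) = 0 := by
    have := landen_identity hmem2
    rw [show (1:ℝ) - ρ^2 = ρ by rw [hq]; ring] at this
    rw [show -(ρ^2)/ρ = -ρ by field_simp] at this
    rw [show (Real.log ρ)^2 = Real.log ρ * Real.log ρ by ring] at this
    exact this
  -- E3 : duplication at ρ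
  have E3 : Li 2 ρ + Li 2 (-ρ) = (1/2) * Li 2 (ρ^2) :=
    Li2_duplication (by rw [abs_of_pos hρ0]; linarith)
  -- E4 : duplication at ρ³
  have hρ3pos : 0 < ρ^3 := by positivity
  have E4 : Li 2 (ρ^3) + Li 2 (-ρ^3) = (1/2) * Li 2 (ρ^6) := by
    have := Li2_duplication (x := ρ^3) (by rw [abs_of_pos hρ3pos]; nlinarith)
    rw [show (ρ^3)^2 = ρ^6 by ring] at this
    exact this
  -- E5 : chi2 identity at ρ
  have hcube : (1 - ρ)/(1 + ρ) = ρ^3 := by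
    rw [div_eq_iff (by linarith : (1:ℝ) + ρ ≠ 0)]
    linear_combination (-(ρ^2) - 1) * hq
  have E5 : chi2 ρ + chi2 (ρ^3) + (1/2) * (Real.log ρ * (3 * Real.log ρ)) = π^2/8 := by
    have := chi2_identity hmem
    rw [hcube] at this
    rw [show Real.log (ρ^3) = 3 * Real.log ρ by
      rw [Real.log_pow]; push_cast; ring] at this
    exact this
  rw [chi2, chi2] at E5
  have K := Real.log ρ * Real.log ρ
  nlinarith [E1, E2, E3, E4, E5, sq_nonneg (Real.log ρ)]
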